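/- Fix real p > 1 and b > 0, and let i ≥ 1 be an integer. Set α := ((i+1)^{p−1} − i^{p−1})/((i+1)^{p−1} + b^{p−1} i^{p−1}) and D_i := diag(b·i, (i+1)^{p−1}). Then α ∈ (0,1), A_i = α·B_{i+1} + (1−α)·D_i, and the matrix B_{i+1} − D_i has rank 1. Moreover α = 1 − (1 + b^{p−1})/((1 + 1/i)^{p−1} + b^{p−1}). -/

import Mathlib

open Real

/-- `A_i = diag(b·i, i^{p−1})`. -/
noncomputable def Amat (p b : ℝ) (i : ℕ) : Matrix (Fin 2) (Fin 2) ℝ :=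
  !![b * i, 0; 0, (i : ℝ) ^ (p - 1)]

/-- `B_i = diag(b(i−1), −b^{p−1}(i−1)^{p−1})`. -/
noncomputable def Bmat (p b : ℝ) (i : ℕ) : Matrix (Fin 2) (Fin 2) ℝ :=
  !![b * ((i : ℝ) - 1), 0; 0, -(b ^ (p - 1) * ((i : ℝ) - 1) ^ (p - 1))]

lemma rank_aux (d : ℝ) (hd : d ≠ 0) : (!![(0:ℝ),0;0,d]).rank = 1 := by
  have : !![(0:ℝ),0;0,d] = Matrix.diagonal ![0,d] := by
    ext i j; fin_cases i <;> fin_cases j <;> simp [Matrix.diagonal]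
  rw [this, Matrix.rank_diagonal]
  rw [Fintype.card_subtype]
  rw [show (Finset.filter (fun x => ![(0:ℝ), d] x ≠ 0) Finset.univ) = {1} from ?_]
  · simp
  · ext j; fin_cases j <;> simp [hd]

/-- **Lemma (first elementary splitting).** For `i ≥ 1`, with
`α = ((i+1)^{p−1} − i^{p−1})/((i+1)^{p−1} + b^{p−1} i^{p−1})` and
`D_i = diag(b·i, (i+1)^{p−1})` one has `α ∈ (0,1)`, `A_i = α B_{i+1} + (1−α) D_i`,
`rank(B_{i+1} − D_i) = 1`, and `α = 1 − (1+b^{p−1})/((1+1/i)^{p−1}+b^{p−1})`. -/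
theorem first_elementary_splitting (p b : ℝ) (hp : 1 < p) (hb : 0 < b)
    (i : ℕ) (hi : 1 ≤ i) (α : ℝ)
    (hα : α = (((i : ℝ) + 1) ^ (p - 1) - (i : ℝ) ^ (p - 1)) /
      (((i : ℝ) + 1) ^ (p - 1) + b ^ (p - 1) * (i : ℝ) ^ (p - 1)))
    (D : Matrix (Fin 2) (Fin 2) ℝ)
    (hD : D = !![b * i, 0; 0, ((i : ℝ) + 1) ^ (p - 1)]) :
    0 < α ∧ α < 1 ∧
    Amat p b i = α • Bmat p b (i + 1) + (1 - α) • D ∧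
    (Bmat p b (i + 1) - D).rank = 1 ∧
    α = 1 - (1 + b ^ (p - 1)) / ((1 + 1 / (i : ℝ)) ^ (p - 1) + b ^ (p - 1)) := by
  have hi0 : (0:ℝ) < (i : ℝ) := by exact_mod_cast hi
  have hq : (0:ℝ) < p - 1 := by linarith
  set x := (i : ℝ) ^ (p - 1) with hx
  set y := ((i : ℝ) + 1) ^ (p - 1) with hy
  set c := b ^ (p - 1) with hc
  have hxpos : 0 < x := rpow_pos_of_pos hi0 _
  have hypos : 0 < y := rpow_pos_of_pos (by linarith) _
  have hcpos : 0 < c := rpow_pos_of_pos hb _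
  have hxy : x < y := rpow_lt_rpow (le_of_lt hi0) (by linarith) hq
  have hden : 0 < y + c * x := by positivity
  have h1 : 0 < α := by rw [hα]; exact div_pos (by linarith) hden
  have h2 : α < 1 := by
    rw [hα, div_lt_one hden]; nlinarith
  refine ⟨h1, h2, ?_, ?_, ?_⟩
  · rw [hD]
    ext r s
    fin_cases r <;> fin_cases s <;>
      simp [Amat, Bmat, Matrix.add_apply, Matrix.smul_apply, ← hx]
    · push_cast; ring
    · rw [hα]; field_simp; ring
  · have key : Bmat p b (i + 1) - D = !![0,0;0, -(c * x) - y] := by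
      rw [hD]
      ext r s
      fin_cases r <;> fin_cases s <;>
        simp [Bmat, Matrix.sub_apply, ← hx]
      exact Or.inl hc.symm
    rw [key]
    exact rank_aux _ (by nlinarith)
  · have hdiv : (1 + 1 / (i : ℝ)) ^ (p - 1) = y / x := by
      rw [show (1 + 1 / (i : ℝ)) = ((i : ℝ) + 1) / i by field_simp,
        div_rpow (by linarith) (le_of_lt hi0)]
    have hxne : x ≠ 0 := ne_of_gt hxpos
    have hne : y / x + c ≠ 0 := by positivity
    rw [hα, hdiv, eq_sub_iff_add_eq]
    field_simp
    ring
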